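/- Let α₁, α₂, α₃ ∈ ℂ be pairwise distinct, κ₁, κ₂, κ₃ ∈ ℂ∖{0}, and let L ⊆ (ℂ∖{0})³ be the image of the map z ↦ (κ₁(z−α₁), κ₂(z−α₂), κ₃(z−α₃)) defined on ℂ∖{α₁,α₂,α₃}. Set u₀ = (1,1,1), u₁ = (−1,0,0), u₂ = (0,−1,0), u₃ = (0,0,−1). Then there exist v ∈ ℝ³, l ≥ 0 and a partition {0,1,2,3} = {a,b} ⊔ {c,d} into two pairs such that, with w = v + l·(u_c + u_d) and Γ = {v + t·u_a : t ≥ 0} ∪ {v + t·u_b : t ≥ 0} ∪ {v + t·(u_c+u_d) : t ∈ [0,l]} ∪ {w + t·u_c : t ≥ 0} ∪ {w + t·u_d : t ≥ 0}, we have Log(L) ⊆ U_{8 log 2}(Γ) and Γ ⊆ U_{24 log 2}(Log(L)). -/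

import Mathlib

/-- Coordinate-wise logarithm of moduli, `Log(z)_i = log |z_i|`. -/
noncomputable def LogMap {n : ℕ} (z : Fin n → ℂ) : Fin n → ℝ :=
  fun i => Real.log ‖z i‖

/-- Open ε-neighbourhood of a set with respect to the sup norm on `Fin n → ℝ`. -/
def nbhd {n : ℕ} (ε : ℝ) (X : Set (Fin n → ℝ)) : Set (Fin n → ℝ) :=
  {y | ∃ x ∈ X, ‖y - x‖ < ε}

/-- Ray emanating from `v` in direction `d`. -/
def ray {n : ℕ} (v d : Fin n → ℝ) : Set (Fin n → ℝ) :=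
  {x | ∃ t : ℝ, 0 ≤ t ∧ x = v + t • d}

/-- Segment from `v` in direction `d` of parameter length `l`. -/
def seg {n : ℕ} (v d : Fin n → ℝ) (l : ℝ) : Set (Fin n → ℝ) :=
  {x | ∃ t : ℝ, 0 ≤ t ∧ t ≤ l ∧ x = v + t • d}

/-- The four end directions `u₀ = (1,1,1)`, `u₁ = (-1,0,0)`, `u₂ = (0,-1,0)`,
`u₃ = (0,0,-1)` of a tropical line in `ℝ³`. -/
noncomputable def lineDir : Fin 4 → Fin 3 → ℝ :=
  ![![1, 1, 1], ![-1, 0, 0], ![0, -1, 0], ![0, 0, -1]]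

/-- Image of a tropical line in `ℝ³`: two vertices `v` and `w = v + l•(u_c + u_d)`
joined by a bounded edge, with rays `u_a, u_b` at `v` and rays `u_c, u_d` at `w`. -/
noncomputable def tropLine3 (a b c d : Fin 4) (v : Fin 3 → ℝ) (l : ℝ) :
    Set (Fin 3 → ℝ) :=
  ray v (lineDir a) ∪ ray v (lineDir b) ∪
    seg v (lineDir c + lineDir d) l ∪
    ray (v + l • (lineDir c + lineDir d)) (lineDir c) ∪
    ray (v + l • (lineDir c + lineDir d)) (lineDir d)

lemma log_diff_le {r ρ : ℝ} (hρ : 0 < ρ) (h1 : ρ ≤ 8 * r) (h2 : r ≤ 8 * ρ) :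
    |Real.log r - Real.log ρ| ≤ 3 * Real.log 2 := by
  have hr : 0 < r := by linarith
  have h8 : Real.log 8 = 3 * Real.log 2 := by
    rw [show (8:ℝ) = 2^3 by norm_num, Real.log_pow]; push_cast; ring
  rw [abs_le]
  constructor
  · have := Real.log_le_log hρ h1
    rw [Real.log_mul (by norm_num) hr.ne', h8] at this
    linarith
  · have := Real.log_le_log hr h2
    rw [Real.log_mul (by norm_num) hρ.ne', h8] at this
    linarith

lemma fin3_cover {i j k : Fin 3} (hij : i ≠ j) (hik : i ≠ k) (hjk : j ≠ k) (m : Fin 3) :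
    m = i ∨ m = j ∨ m = k := by
  simp only [Ne, Fin.ext_iff] at *
  omega

lemma no_two {ρ : ℝ} (hρ : 0 < ρ) (x y q : ℂ) (hxy : dist x y = ρ * Real.sqrt 3)
    (hx : dist x q < ρ/2) (hy : dist y q < ρ/2) : False := by
  have h3 : (1:ℝ) < Real.sqrt 3 := by
    rw [show (1:ℝ) = Real.sqrt 1 by simp]
    exact Real.sqrt_lt_sqrt (by norm_num) (by norm_num)
  have ht := dist_triangle x q y
  rw [dist_comm q y] at ht
  nlinarith

lemma exists_good_point (p q₁ q₂ : ℂ) {ρ : ℝ} (hρ : 0 < ρ) :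
    ∃ z : ℂ, dist z p = ρ ∧ ρ/2 ≤ dist z q₁ ∧ ρ/2 ≤ dist z q₂ := by
  set c0 : ℂ := 1 with hc0
  set c1 : ℂ := ⟨-(1/2), Real.sqrt 3 / 2⟩ with hc1
  set c2 : ℂ := ⟨-(1/2), -(Real.sqrt 3 / 2)⟩ with hc2
  have hsq : Real.sqrt 3 * Real.sqrt 3 = 3 := Real.mul_self_sqrt (by norm_num)
  have habs : ∀ c : ℂ, c.re * c.re + c.im * c.im = 1 → ‖c‖ = 1 := by
    intro c h
    rw [Complex.norm_def, Complex.normSq_apply, h, Real.sqrt_one]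
  have hd : ∀ m : ℂ, ‖m‖ = 1 → dist (p + ρ * m) p = ρ := by
    intro m hm
    rw [Complex.dist_eq, add_sub_cancel_left, norm_mul, hm, mul_one, Complex.norm_real,
      Real.norm_eq_abs, abs_of_pos hρ]
  have hdist : ∀ a b : ℂ, ‖a - b‖ = Real.sqrt 3 →
      dist (p + ρ * a) (p + ρ * b) = ρ * Real.sqrt 3 := by
    intro a b hab
    rw [Complex.dist_eq, show p + ρ*a - (p + ρ*b) = (ρ:ℂ) * (a - b) by ring, norm_mul, hab,
      Complex.norm_real, Real.norm_eq_abs, abs_of_pos hρ]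
  have a01 : ‖c0 - c1‖ = Real.sqrt 3 := by
    rw [Complex.norm_def, Complex.normSq_apply]
    have : (c0 - c1).re = 3/2 ∧ (c0 - c1).im = -(Real.sqrt 3/2) := by
      constructor <;> simp [hc0, hc1, Complex.sub_re, Complex.sub_im]
      all_goals norm_num
    rw [this.1, this.2]
    rw [show 3/2 * (3/2) + -(Real.sqrt 3/2) * -(Real.sqrt 3/2) = 3 by nlinarith]
  have a02 : ‖c0 - c2‖ = Real.sqrt 3 := by
    rw [Complex.norm_def, Complex.normSq_apply]
    have h1 : (c0 - c2).re = 3/2 := by simp [hc0, hc2, Complex.sub_re]; norm_num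
    have h2 : (c0 - c2).im = Real.sqrt 3/2 := by simp [hc0, hc2, Complex.sub_im]
    rw [h1, h2, show 3/2 * (3/2) + Real.sqrt 3/2 * (Real.sqrt 3/2) = 3 by nlinarith]
  have a12 : ‖c1 - c2‖ = Real.sqrt 3 := by
    rw [Complex.norm_def, Complex.normSq_apply]
    have h1 : (c1 - c2).re = 0 := by simp [hc1, hc2, Complex.sub_re]
    have h2 : (c1 - c2).im = Real.sqrt 3 := by
      simp [hc1, hc2, Complex.sub_im]
    rw [h1, h2, show 0 * 0 + Real.sqrt 3 * Real.sqrt 3 = 3 by nlinarith]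
  have e0 : ‖c0‖ = 1 := by simp [hc0]
  have e1 : ‖c1‖ = 1 := habs c1 (by simp [hc1]; nlinarith)
  have e2 : ‖c2‖ = 1 := habs c2 (by simp [hc2]; nlinarith)
  have d01 := hdist c0 c1 a01
  have d02 := hdist c0 c2 a02
  have d12 := hdist c1 c2 a12
  by_contra hcon
  push_neg at hcon
  have g : ∀ c : ℂ, ‖c‖ = 1 →
      dist (p + ρ * c) q₁ < ρ/2 ∨ dist (p + ρ * c) q₂ < ρ/2 := by
    intro c hc
    rcases lt_or_ge (dist (p + ρ * c) q₁) (ρ/2) with h | h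
    · exact Or.inl h
    exact Or.inr (hcon _ (hd c hc) h)
  have g0 := g c0 e0
  have g1 := g c1 e1
  have g2 := g c2 e2
  rcases g0 with g0 | g0 <;> rcases g1 with g1 | g1 <;> rcases g2 with g2 | g2
  · exact no_two hρ _ _ _ d01 g0 g1
  · exact no_two hρ _ _ _ d01 g0 g1
  · exact no_two hρ _ _ _ d02 g0 g2
  · exact no_two hρ _ _ _ d12 g1 g2
  · exact no_two hρ _ _ _ d12 g1 g2
  · exact no_two hρ _ _ _ d02 g0 g2
  · exact no_two hρ _ _ _ d01 g0 g1
  · exact no_two hρ _ _ _ d01 g0 g1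

lemma dist_facts (z p q : ℂ) : dist z q ≤ dist z p + dist p q ∧
    dist z p ≤ dist z q + dist p q ∧ dist p q ≤ dist z p + dist z q := by
  refine ⟨dist_triangle z p q, ?_, ?_⟩
  · have := dist_triangle z q p
    rwa [dist_comm q p] at this
  · have := dist_triangle p z q
    rwa [dist_comm p z] at this

lemma lineDir_zero' (m : Fin 3) : lineDir 0 m = 1 := by
  fin_cases m <;> simp [lineDir]

lemma lineDir_succ (a m : Fin 3) : lineDir a.succ m = if m = a then -1 else 0 := by
  fin_cases a <;> fin_cases m <;> simp [lineDir, Fin.succ] <;> rfl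

/-- The auxiliary point map: coordinates `Λ m` shifted by `x` at `i`, `y` at `j`,
`w` elsewhere. -/
noncomputable def Pfun (Λ : Fin 3 → ℝ) (i j : Fin 3) (x y w : ℝ) : Fin 3 → ℝ :=
  fun m => Λ m + (if m = i then x else if m = j then y else w)

lemma Pfun_i (Λ : Fin 3 → ℝ) (i j : Fin 3) (x y w : ℝ) :
    Pfun Λ i j x y w i = Λ i + x := by simp [Pfun]

lemma Pfun_j (Λ : Fin 3 → ℝ) {i j : Fin 3} (hij : i ≠ j) (x y w : ℝ) :
    Pfun Λ i j x y w j = Λ j + y := by simp [Pfun, Ne.symm hij]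

lemma Pfun_k (Λ : Fin 3 → ℝ) {i j k : Fin 3} (hik : i ≠ k) (hjk : j ≠ k) (x y w : ℝ) :
    Pfun Λ i j x y w k = Λ k + w := by simp [Pfun, Ne.symm hik, Ne.symm hjk]

lemma Pfun_norm (Λ : Fin 3 → ℝ) {i j k : Fin 3} (hij : i ≠ j) (hik : i ≠ k) (hjk : j ≠ k)
    {ε : ℝ} (hε : 0 < ε) {x y w x' y' w' : ℝ}
    (hx : |x - x'| < ε) (hy : |y - y'| < ε) (hw : |w - w'| < ε) :
    ‖Pfun Λ i j x y w - Pfun Λ i j x' y' w'‖ < ε := by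
  rw [pi_norm_lt_iff hε]
  intro m
  rcases fin3_cover hij hik hjk m with rfl | rfl | rfl
  · rw [Pi.sub_apply, Pfun_i, Pfun_i, Real.norm_eq_abs,
      show Λ m + x - (Λ m + x') = x - x' by ring]
    exact hx
  · rw [Pi.sub_apply, Pfun_j Λ hij, Pfun_j Λ hij, Real.norm_eq_abs,
      show Λ m + y - (Λ m + y') = y - y' by ring]
    exact hy
  · rw [Pi.sub_apply, Pfun_k Λ hik hjk, Pfun_k Λ hik hjk, Real.norm_eq_abs,
      show Λ m + w - (Λ m + w') = w - w' by ring]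
    exact hw

lemma core (α κ : Fin 3 → ℂ) (hκ : ∀ m, κ m ≠ 0)
    (i j k : Fin 3) (hij : i ≠ j) (hik : i ≠ k) (hjk : j ≠ k)
    (hαij : α i ≠ α j) (hαik : α i ≠ α k) (hαjk : α j ≠ α k)
    (hdD : dist (α i) (α j) ≤ dist (α i) (α k))
    (hdE : dist (α i) (α j) ≤ dist (α j) (α k)) :
    ∃ (v : Fin 3 → ℝ) (l : ℝ), 0 ≤ l ∧
      LogMap '' ((fun z : ℂ => fun m => κ m * (z - α m)) '' {z : ℂ | ∀ m, z ≠ α m})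
        ⊆ nbhd (8 * Real.log 2) (tropLine3 i.succ j.succ 0 k.succ v l) ∧
      tropLine3 i.succ j.succ 0 k.succ v l
        ⊆ nbhd (24 * Real.log 2)
          (LogMap '' ((fun z : ℂ => fun m => κ m * (z - α m)) '' {z : ℂ | ∀ m, z ≠ α m})) := by
  set d := dist (α i) (α j) with hd_def
  set D := dist (α i) (α k) with hD_def
  set E := dist (α j) (α k) with hE_def
  have hd : 0 < d := dist_pos.2 hαij
  have hD : 0 < D := dist_pos.2 hαik
  have hE : 0 < E := dist_pos.2 hαjk
  have hED : E ≤ d + D := by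
    have h := dist_triangle (α j) (α i) (α k)
    rw [dist_comm (α j) (α i)] at h
    exact h
  have hDE : D ≤ d + E := dist_triangle (α i) (α j) (α k)
  set Λ : Fin 3 → ℝ := fun m => Real.log ‖κ m‖ with hΛ_def
  set L1 := Real.log d with hL1
  set L2 := Real.log D with hL2
  have hL : L1 ≤ L2 := Real.log_le_log hd hdD
  have l2pos : (0:ℝ) < Real.log 2 := Real.log_pos one_lt_two
  have hε8 : (0:ℝ) < 8 * Real.log 2 := by linarith
  have hε24 : (0:ℝ) < 24 * Real.log 2 := by linarith
  have b8 : ∀ {r ρ : ℝ}, 0 < ρ → ρ ≤ 8*r → r ≤ 8*ρ →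
      |Real.log r - Real.log ρ| < 8 * Real.log 2 := by
    intro r ρ h h1 h2
    exact lt_of_le_of_lt (log_diff_le h h1 h2) (by linarith)
  have b24 : ∀ {r ρ : ℝ}, 0 < ρ → ρ ≤ 8*r → r ≤ 8*ρ →
      |Real.log r - Real.log ρ| < 24 * Real.log 2 := by
    intro r ρ h h1 h2
    exact lt_of_le_of_lt (log_diff_le h h1 h2) (by linarith)
  have b24' : ∀ {r ρ : ℝ}, 0 < ρ → ρ ≤ 8*r → r ≤ 8*ρ →
      |Real.log ρ - Real.log r| < 24 * Real.log 2 := by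
    intro r ρ h h1 h2
    rw [abs_sub_comm]
    exact b24 h h1 h2
  have bz8 : ∀ x : ℝ, |x - x| < 8 * Real.log 2 := by intro x; simpa using hε8
  have bz24 : ∀ x : ℝ, |x - x| < 24 * Real.log 2 := by intro x; simpa using hε24
  have eqA : ∀ t : ℝ, Pfun Λ i j L1 L1 L2 + t • lineDir i.succ
      = Pfun Λ i j (L1 - t) L1 L2 := by
    intro t; funext m
    rcases fin3_cover hij hik hjk m with rfl | rfl | rfl <;>
      (simp [Pfun, lineDir_succ, lineDir_zero', hij, hik, hjk,
        Ne.symm hij, Ne.symm hik, Ne.symm hjk]; try ring)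
  have eqB : ∀ t : ℝ, Pfun Λ i j L1 L1 L2 + t • lineDir j.succ
      = Pfun Λ i j L1 (L1 - t) L2 := by
    intro t; funext m
    rcases fin3_cover hij hik hjk m with rfl | rfl | rfl <;>
      (simp [Pfun, lineDir_succ, lineDir_zero', hij, hik, hjk,
        Ne.symm hij, Ne.symm hik, Ne.symm hjk]; try ring)
  have eqS : ∀ t : ℝ, Pfun Λ i j L1 L1 L2 + t • (lineDir 0 + lineDir k.succ)
      = Pfun Λ i j (L1 + t) (L1 + t) L2 := by
    intro t; funext m
    rcases fin3_cover hij hik hjk m with rfl | rfl | rfl <;>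
      (simp [Pfun, lineDir_succ, lineDir_zero', hij, hik, hjk,
        Ne.symm hij, Ne.symm hik, Ne.symm hjk]; try ring)
  have eqC : ∀ t : ℝ, (Pfun Λ i j L1 L1 L2 + (L2 - L1) • (lineDir 0 + lineDir k.succ))
      + t • lineDir 0 = Pfun Λ i j (L2 + t) (L2 + t) (L2 + t) := by
    intro t; funext m
    rcases fin3_cover hij hik hjk m with rfl | rfl | rfl <;>
      (simp [Pfun, lineDir_succ, lineDir_zero', hij, hik, hjk,
        Ne.symm hij, Ne.symm hik, Ne.symm hjk]; try ring)
  have eqD : ∀ t : ℝ, (Pfun Λ i j L1 L1 L2 + (L2 - L1) • (lineDir 0 + lineDir k.succ))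
      + t • lineDir k.succ = Pfun Λ i j L2 L2 (L2 - t) := by
    intro t; funext m
    rcases fin3_cover hij hik hjk m with rfl | rfl | rfl <;>
      (simp [Pfun, lineDir_succ, lineDir_zero', hij, hik, hjk,
        Ne.symm hij, Ne.symm hik, Ne.symm hjk]; try ring)
  have Feq : ∀ z : ℂ, (∀ m, z ≠ α m) →
      LogMap (fun m => κ m * (z - α m)) =
        Pfun Λ i j (Real.log (dist z (α i))) (Real.log (dist z (α j)))
          (Real.log (dist z (α k))) := by
    intro z hz
    have key : ∀ m, Real.log ‖κ m * (z - α m)‖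
        = Λ m + Real.log (dist z (α m)) := by
      intro m
      rw [norm_mul, Real.log_mul (norm_ne_zero_iff.2 (hκ m))
        (norm_ne_zero_iff.2 (sub_ne_zero.2 (hz m))), Complex.dist_eq]
    funext m
    show Real.log ‖κ m * (z - α m)‖ = _
    rcases fin3_cover hij hik hjk m with rfl | rfl | rfl
    · rw [key, Pfun_i]
    · rw [key, Pfun_j Λ hij]
    · rw [key, Pfun_k Λ hik hjk]
  have Fmem : ∀ z : ℂ, (∀ m, z ≠ α m) →
      Pfun Λ i j (Real.log (dist z (α i))) (Real.log (dist z (α j)))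
          (Real.log (dist z (α k)))
        ∈ LogMap '' ((fun z : ℂ => fun m => κ m * (z - α m)) '' {z : ℂ | ∀ m, z ≠ α m}) :=
    fun z hz => ⟨_, ⟨z, hz, rfl⟩, Feq z hz⟩
  refine ⟨Pfun Λ i j L1 L1 L2, L2 - L1, by linarith, ?_, ?_⟩
  · -- Log L ⊆ U_{8 log 2}(Γ)
    rintro x ⟨w, ⟨z, hz, rfl⟩, rfl⟩
    show LogMap (fun m => κ m * (z - α m)) ∈ _
    rw [Feq z hz]
    obtain ⟨t1, t2, t3⟩ := dist_facts z (α i) (α j)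
    obtain ⟨s1, s2, s3⟩ := dist_facts z (α i) (α k)
    obtain ⟨u1, u2, u3⟩ := dist_facts z (α j) (α k)
    have hr1 : 0 < dist z (α i) := dist_pos.2 (hz i)
    have hr2 : 0 < dist z (α j) := dist_pos.2 (hz j)
    have hr3 : 0 < dist z (α k) := dist_pos.2 (hz k)
    set r1 := dist z (α i) with hr1_def
    set r2 := dist z (α j) with hr2_def
    set r3 := dist z (α k) with hr3_def
    rcases le_total r1 r2 with h1 | h1
    · rcases le_total r1 r3 with h2 | h2
      · -- r1 is minimal
        rcases le_total r1 d with h3 | h3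
        · -- ray u_a
          refine ⟨Pfun Λ i j (Real.log r1) L1 L2,
            Or.inl (Or.inl (Or.inl (Or.inl ⟨L1 - Real.log r1,
              sub_nonneg.2 (Real.log_le_log hr1 h3), by
                rw [eqA, show L1 - (L1 - Real.log r1) = Real.log r1 by ring]⟩))),
            Pfun_norm Λ hij hik hjk hε8 (bz8 _) ?_ ?_⟩
          · exact b8 hd (by linarith) (by linarith)
          · exact b8 hD (by linarith) (by linarith)
        · rcases le_total r1 D with h4 | h4
          · -- segment
            refine ⟨Pfun Λ i j (Real.log r1) (Real.log r1) L2,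
              Or.inl (Or.inl (Or.inr ⟨Real.log r1 - L1,
                sub_nonneg.2 (Real.log_le_log hd h3),
                by have := Real.log_le_log hr1 h4; linarith, by
                  rw [eqS, show L1 + (Real.log r1 - L1) = Real.log r1 by ring]⟩)),
              Pfun_norm Λ hij hik hjk hε8 (bz8 _) ?_ ?_⟩
            · exact b8 hr1 (by linarith) (by linarith)
            · exact b8 hD (by linarith) (by linarith)
          · -- ray u_c
            refine ⟨Pfun Λ i j (Real.log r1) (Real.log r1) (Real.log r1),
              Or.inl (Or.inr ⟨Real.log r1 - L2,
                sub_nonneg.2 (Real.log_le_log hD h4), by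
                  rw [eqC, show L2 + (Real.log r1 - L2) = Real.log r1 by ring]⟩),
              Pfun_norm Λ hij hik hjk hε8 (bz8 _) ?_ ?_⟩
            · exact b8 hr1 (by linarith) (by linarith)
            · exact b8 hr1 (by linarith) (by linarith)
      · -- r3 ≤ r1 ≤ r2 : r3 minimal
        have h1' : r3 ≤ r2 := le_trans h2 h1
        rcases le_total r3 D with h3 | h3
        · refine ⟨Pfun Λ i j L2 L2 (Real.log r3),
            Or.inr ⟨L2 - Real.log r3, sub_nonneg.2 (Real.log_le_log hr3 h3), by
              rw [eqD, show L2 - (L2 - Real.log r3) = Real.log r3 by ring]⟩,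
            Pfun_norm Λ hij hik hjk hε8 ?_ ?_ (bz8 _)⟩
          · exact b8 hD (by linarith) (by linarith)
          · exact b8 hD (by linarith) (by linarith)
        · refine ⟨Pfun Λ i j (Real.log r3) (Real.log r3) (Real.log r3),
            Or.inl (Or.inr ⟨Real.log r3 - L2,
              sub_nonneg.2 (Real.log_le_log hD h3), by
                rw [eqC, show L2 + (Real.log r3 - L2) = Real.log r3 by ring]⟩),
            Pfun_norm Λ hij hik hjk hε8 ?_ ?_ (bz8 _)⟩
          · exact b8 hr3 (by linarith) (by linarith)
          · exact b8 hr3 (by linarith) (by linarith)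
    · rcases le_total r2 r3 with h2 | h2
      · -- r2 minimal
        rcases le_total r2 d with h3 | h3
        · -- ray u_b
          refine ⟨Pfun Λ i j L1 (Real.log r2) L2,
            Or.inl (Or.inl (Or.inl (Or.inr ⟨L1 - Real.log r2,
              sub_nonneg.2 (Real.log_le_log hr2 h3), by
                rw [eqB, show L1 - (L1 - Real.log r2) = Real.log r2 by ring]⟩))),
            Pfun_norm Λ hij hik hjk hε8 ?_ (bz8 _) ?_⟩
          · exact b8 hd (by linarith) (by linarith)
          · exact b8 hD (by linarith) (by linarith)
        · rcases le_total r2 D with h4 | h4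
          · -- segment
            refine ⟨Pfun Λ i j (Real.log r2) (Real.log r2) L2,
              Or.inl (Or.inl (Or.inr ⟨Real.log r2 - L1,
                sub_nonneg.2 (Real.log_le_log hd h3),
                by have := Real.log_le_log hr2 h4; linarith, by
                  rw [eqS, show L1 + (Real.log r2 - L1) = Real.log r2 by ring]⟩)),
              Pfun_norm Λ hij hik hjk hε8 ?_ (bz8 _) ?_⟩
            · exact b8 hr2 (by linarith) (by linarith)
            · exact b8 hD (by linarith) (by linarith)
          · -- ray u_c
            refine ⟨Pfun Λ i j (Real.log r2) (Real.log r2) (Real.log r2),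
              Or.inl (Or.inr ⟨Real.log r2 - L2,
                sub_nonneg.2 (Real.log_le_log hD h4), by
                  rw [eqC, show L2 + (Real.log r2 - L2) = Real.log r2 by ring]⟩),
              Pfun_norm Λ hij hik hjk hε8 ?_ (bz8 _) ?_⟩
            · exact b8 hr2 (by linarith) (by linarith)
            · exact b8 hr2 (by linarith) (by linarith)
      · -- r3 ≤ r2 ≤ r1 : r3 minimal
        have h1' : r3 ≤ r1 := le_trans h2 h1
        rcases le_total r3 D with h3 | h3
        · refine ⟨Pfun Λ i j L2 L2 (Real.log r3),
            Or.inr ⟨L2 - Real.log r3, sub_nonneg.2 (Real.log_le_log hr3 h3), by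
              rw [eqD, show L2 - (L2 - Real.log r3) = Real.log r3 by ring]⟩,
            Pfun_norm Λ hij hik hjk hε8 ?_ ?_ (bz8 _)⟩
          · exact b8 hD (by linarith) (by linarith)
          · exact b8 hD (by linarith) (by linarith)
        · refine ⟨Pfun Λ i j (Real.log r3) (Real.log r3) (Real.log r3),
            Or.inl (Or.inr ⟨Real.log r3 - L2,
              sub_nonneg.2 (Real.log_le_log hD h3), by
                rw [eqC, show L2 + (Real.log r3 - L2) = Real.log r3 by ring]⟩),
            Pfun_norm Λ hij hik hjk hε8 ?_ ?_ (bz8 _)⟩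
          · exact b8 hr3 (by linarith) (by linarith)
          · exact b8 hr3 (by linarith) (by linarith)
  · -- Γ ⊆ U_{24 log 2}(Log L)
    rintro x hx
    rcases hx with ((((⟨t, ht, rfl⟩ | ⟨t, ht, rfl⟩) | ⟨t, ht, htl, rfl⟩) | ⟨t, ht, rfl⟩)
      | ⟨t, ht, rfl⟩)
    · -- ray u_a
      rw [eqA t]
      set ρ := d * Real.exp (-t) with hρ_def
      have hexp1 : Real.exp (-t) ≤ 1 := by
        rw [← Real.exp_zero]; exact Real.exp_le_exp.2 (by linarith)
      have hρ : 0 < ρ := by positivity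
      have hρd : ρ ≤ d := by nlinarith [Real.exp_pos (-t)]
      have hlogρ : Real.log ρ = L1 - t := by
        rw [hρ_def, Real.log_mul hd.ne' (Real.exp_ne_zero _), Real.log_exp, hL1]; ring
      obtain ⟨z, hz0, hz1, hz2⟩ := exists_good_point (α i) (α j) (α k) hρ
      have hzz : ∀ m, z ≠ α m := by
        intro m
        rcases fin3_cover hij hik hjk m with rfl | rfl | rfl
        · intro h; rw [h, dist_self] at hz0; linarith
        · intro h; rw [h, dist_self] at hz1; linarith
        · intro h; rw [h, dist_self] at hz2; linarith
      obtain ⟨t1, t2, t3⟩ := dist_facts z (α i) (α j)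
      obtain ⟨s1, s2, s3⟩ := dist_facts z (α i) (α k)
      refine ⟨_, Fmem z hzz, Pfun_norm Λ hij hik hjk hε24 ?_ ?_ ?_⟩
      · rw [hz0, hlogρ]; exact bz24 _
      · exact b24' hd (by linarith) (by linarith)
      · exact b24' hD (by linarith) (by linarith)
    · -- ray u_b
      rw [eqB t]
      set ρ := d * Real.exp (-t) with hρ_def
      have hexp1 : Real.exp (-t) ≤ 1 := by
        rw [← Real.exp_zero]; exact Real.exp_le_exp.2 (by linarith)
      have hρ : 0 < ρ := by positivity
      have hρd : ρ ≤ d := by nlinarith [Real.exp_pos (-t)]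
      have hlogρ : Real.log ρ = L1 - t := by
        rw [hρ_def, Real.log_mul hd.ne' (Real.exp_ne_zero _), Real.log_exp, hL1]; ring
      obtain ⟨z, hz0, hz1, hz2⟩ := exists_good_point (α j) (α i) (α k) hρ
      have hzz : ∀ m, z ≠ α m := by
        intro m
        rcases fin3_cover hij hik hjk m with rfl | rfl | rfl
        · intro h; rw [h, dist_self] at hz1; linarith
        · intro h; rw [h, dist_self] at hz0; linarith
        · intro h; rw [h, dist_self] at hz2; linarith
      obtain ⟨t1, t2, t3⟩ := dist_facts z (α i) (α j)
      obtain ⟨u1, u2, u3⟩ := dist_facts z (α j) (α k)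
      refine ⟨_, Fmem z hzz, Pfun_norm Λ hij hik hjk hε24 ?_ ?_ ?_⟩
      · exact b24' hd (by linarith) (by linarith)
      · rw [hz0, hlogρ]; exact bz24 _
      · exact b24' hD (by linarith) (by linarith)
    · -- segment
      rw [eqS t]
      set ρ := d * Real.exp t with hρ_def
      have hexp1 : 1 ≤ Real.exp t := Real.one_le_exp ht
      have hρ : 0 < ρ := by positivity
      have hρd : d ≤ ρ := by nlinarith
      have hρD : ρ ≤ D := by
        have h1 : Real.exp t ≤ Real.exp (L2 - L1) := Real.exp_le_exp.2 htl
        have h2 : Real.exp (L2 - L1) = D / d := by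
          rw [Real.exp_sub, hL1, hL2, Real.exp_log hD, Real.exp_log hd]
        rw [h2] at h1
        rw [hρ_def]
        calc d * Real.exp t ≤ d * (D / d) := by nlinarith
          _ = D := by field_simp
      have hlogρ : Real.log ρ = L1 + t := by
        rw [hρ_def, Real.log_mul hd.ne' (Real.exp_ne_zero _), Real.log_exp, hL1]
      obtain ⟨z, hz0, hz1, hz2⟩ := exists_good_point (α i) (α j) (α k) hρ
      have hzz : ∀ m, z ≠ α m := by
        intro m
        rcases fin3_cover hij hik hjk m with rfl | rfl | rfl
        · intro h; rw [h, dist_self] at hz0; linarith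
        · intro h; rw [h, dist_self] at hz1; linarith
        · intro h; rw [h, dist_self] at hz2; linarith
      obtain ⟨t1, t2, t3⟩ := dist_facts z (α i) (α j)
      obtain ⟨s1, s2, s3⟩ := dist_facts z (α i) (α k)
      refine ⟨_, Fmem z hzz, Pfun_norm Λ hij hik hjk hε24 ?_ ?_ ?_⟩
      · rw [hz0, hlogρ]; exact bz24 _
      · rw [← hlogρ]; exact b24' hρ (by linarith) (by linarith)
      · exact b24' hD (by linarith) (by linarith)
    · -- ray u_c
      rw [eqC t]
      set ρ := D * Real.exp t with hρ_def
      have hexp1 : 1 ≤ Real.exp t := Real.one_le_exp ht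
      have hρ : 0 < ρ := by positivity
      have hρD : D ≤ ρ := by nlinarith
      have hlogρ : Real.log ρ = L2 + t := by
        rw [hρ_def, Real.log_mul hD.ne' (Real.exp_ne_zero _), Real.log_exp, hL2]
      obtain ⟨z, hz0, hz1, hz2⟩ := exists_good_point (α i) (α j) (α k) hρ
      have hzz : ∀ m, z ≠ α m := by
        intro m
        rcases fin3_cover hij hik hjk m with rfl | rfl | rfl
        · intro h; rw [h, dist_self] at hz0; linarith
        · intro h; rw [h, dist_self] at hz1; linarith
        · intro h; rw [h, dist_self] at hz2; linarith
      obtain ⟨t1, t2, t3⟩ := dist_facts z (α i) (α j)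
      obtain ⟨s1, s2, s3⟩ := dist_facts z (α i) (α k)
      refine ⟨_, Fmem z hzz, Pfun_norm Λ hij hik hjk hε24 ?_ ?_ ?_⟩
      · rw [hz0, hlogρ]; exact bz24 _
      · rw [← hlogρ]; exact b24' hρ (by linarith) (by linarith)
      · rw [← hlogρ]; exact b24' hρ (by linarith) (by linarith)
    · -- ray u_d
      rw [eqD t]
      set ρ := D * Real.exp (-t) with hρ_def
      have hexp1 : Real.exp (-t) ≤ 1 := by
        rw [← Real.exp_zero]; exact Real.exp_le_exp.2 (by linarith)
      have hρ : 0 < ρ := by positivity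
      have hρD : ρ ≤ D := by nlinarith [Real.exp_pos (-t)]
      have hlogρ : Real.log ρ = L2 - t := by
        rw [hρ_def, Real.log_mul hD.ne' (Real.exp_ne_zero _), Real.log_exp, hL2]; ring
      obtain ⟨z, hz0, hz1, hz2⟩ := exists_good_point (α k) (α i) (α j) hρ
      have hzz : ∀ m, z ≠ α m := by
        intro m
        rcases fin3_cover hij hik hjk m with rfl | rfl | rfl
        · intro h; rw [h, dist_self] at hz1; linarith
        · intro h; rw [h, dist_self] at hz2; linarith
        · intro h; rw [h, dist_self] at hz0; linarith
      obtain ⟨s1, s2, s3⟩ := dist_facts z (α i) (α k)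
      obtain ⟨u1, u2, u3⟩ := dist_facts z (α j) (α k)
      rw [← hD_def] at s1 s2 s3
      rw [← hE_def] at u1 u2 u3
      refine ⟨_, Fmem z hzz, Pfun_norm Λ hij hik hjk hε24 ?_ ?_ ?_⟩
      · rw [hL2]
        have hh1 : D ≤ 8 * dist z (α i) := by linarith only [s3, hz0, hz1, hρ]
        have hh2 : dist z (α i) ≤ 8 * D := by linarith only [s2, hz0, hρD, hD]
        exact b24' hD hh1 hh2
      · rw [hL2]
        have hh1 : D ≤ 8 * dist z (α j) := by
          linarith only [u3, hz0, hz2, hρ, hDE, hdE, hE]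
        have hh2 : dist z (α j) ≤ 8 * D := by
          linarith only [u2, hz0, hρD, hD, hED, hdD, hd]
        exact b24' hD hh1 hh2
      · rw [hz0, hlogρ]; exact bz24 _

/-- For the complex line `L ⊆ (ℂ*)³` parametrised by
`z ↦ (κ₁(z-α₁), κ₂(z-α₂), κ₃(z-α₃))` there exist a tropical line `Γ` in `ℝ³`
(two vertices joined by a bounded edge, with two of the four rays at each vertex)
with `Log(L) ⊆ U_{8 log 2}(Γ)` and `Γ ⊆ U_{24 log 2}(Log(L))`. -/
theorem stmt_5 (α₁ α₂ α₃ : ℂ) (h12 : α₁ ≠ α₂) (h13 : α₁ ≠ α₃) (h23 : α₂ ≠ α₃)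
    (κ₁ κ₂ κ₃ : ℂ) (hκ₁ : κ₁ ≠ 0) (hκ₂ : κ₂ ≠ 0) (hκ₃ : κ₃ ≠ 0) :
    ∃ (v : Fin 3 → ℝ) (l : ℝ) (a b c d : Fin 4),
      0 ≤ l ∧
      a ≠ b ∧ a ≠ c ∧ a ≠ d ∧ b ≠ c ∧ b ≠ d ∧ c ≠ d ∧
      LogMap '' ((fun z : ℂ => ![κ₁ * (z - α₁), κ₂ * (z - α₂), κ₃ * (z - α₃)]) ''
          {z : ℂ | z ≠ α₁ ∧ z ≠ α₂ ∧ z ≠ α₃})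
        ⊆ nbhd (8 * Real.log 2) (tropLine3 a b c d v l) ∧
      tropLine3 a b c d v l
        ⊆ nbhd (24 * Real.log 2)
          (LogMap '' ((fun z : ℂ => ![κ₁ * (z - α₁), κ₂ * (z - α₂), κ₃ * (z - α₃)]) ''
            {z : ℂ | z ≠ α₁ ∧ z ≠ α₂ ∧ z ≠ α₃})) := by
  have hfun : (fun z : ℂ => ![κ₁ * (z - α₁), κ₂ * (z - α₂), κ₃ * (z - α₃)])
      = (fun z : ℂ => fun m => (![κ₁, κ₂, κ₃]) m * (z - (![α₁, α₂, α₃]) m)) := by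
    funext z m
    fin_cases m <;> simp
  have hset : {z : ℂ | z ≠ α₁ ∧ z ≠ α₂ ∧ z ≠ α₃}
      = {z : ℂ | ∀ m, z ≠ (![α₁, α₂, α₃]) m} := by
    ext z
    constructor
    · rintro ⟨h1, h2, h3⟩ m
      fin_cases m <;> simpa
    · intro h
      exact ⟨by simpa using h 0, by simpa using h 1, by simpa using h 2⟩
  rw [hfun, hset]
  have hκ : ∀ m : Fin 3, (![κ₁, κ₂, κ₃]) m ≠ 0 := by
    intro m; fin_cases m <;> simpa
  rcases le_total (dist α₁ α₂) (dist α₁ α₃) with h1 | h1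
  · rcases le_total (dist α₁ α₂) (dist α₂ α₃) with h2 | h2
    · obtain ⟨v, l, hl, hsub1, hsub2⟩ := core (![α₁, α₂, α₃]) (![κ₁, κ₂, κ₃]) hκ 0 1 2
        (by decide) (by decide) (by decide) (by simpa) (by simpa) (by simpa)
        (by simpa) (by simpa)
      exact ⟨v, l, _, _, _, _, hl, by decide, by decide, by decide, by decide, by decide,
        by decide, hsub1, hsub2⟩
    · obtain ⟨v, l, hl, hsub1, hsub2⟩ := core (![α₁, α₂, α₃]) (![κ₁, κ₂, κ₃]) hκ 1 2 0
        (by decide) (by decide) (by decide) (by simpa) (by simpa using h12.symm)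
        (by simpa using h13.symm)
        (by simpa [dist_comm] using h2) (by simpa [dist_comm] using h2.trans h1)
      exact ⟨v, l, _, _, _, _, hl, by decide, by decide, by decide, by decide, by decide,
        by decide, hsub1, hsub2⟩
  · rcases le_total (dist α₁ α₃) (dist α₂ α₃) with h2 | h2
    · obtain ⟨v, l, hl, hsub1, hsub2⟩ := core (![α₁, α₂, α₃]) (![κ₁, κ₂, κ₃]) hκ 0 2 1
        (by decide) (by decide) (by decide) (by simpa) (by simpa)
        (by simpa using h23.symm)
        (by simpa) (by simpa [dist_comm] using h2)
      exact ⟨v, l, _, _, _, _, hl, by decide, by decide, by decide, by decide, by decide,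
        by decide, hsub1, hsub2⟩
    · obtain ⟨v, l, hl, hsub1, hsub2⟩ := core (![α₁, α₂, α₃]) (![κ₁, κ₂, κ₃]) hκ 1 2 0
        (by decide) (by decide) (by decide) (by simpa) (by simpa using h12.symm)
        (by simpa using h13.symm)
        (by simpa [dist_comm] using h2.trans h1) (by simpa [dist_comm] using h2)
      exact ⟨v, l, _, _, _, _, hl, by decide, by decide, by decide, by decide, by decide,
        by decide, hsub1, hsub2⟩
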